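/- Let D be a disk-polygon with center parameter d, where 1 ≤ d < √3. Then the circumradius of the dual disk-polygon satisfies R(D*) ≤ d/√3. -/

import Mathlib

open Metric Real MeasureTheory
open scoped InnerProductSpace Pointwise ENNReal

noncomputable section

/-- The Euclidean plane. -/
abbrev E2 := EuclideanSpace ℝ (Fin 2)

/-- The point of the Euclidean plane with the given coordinates. -/
def pt (a b : ℝ) : E2 := (EuclideanSpace.equiv (Fin 2) ℝ).symm ![a, b]

/-- The width of a set `C` in the direction of the unit vector `u`. -/
def dirWidth (C : Set E2) (u : E2) : ℝ :=
  sSup {w : ℝ | ∃ x ∈ C, ∃ y ∈ C, w = ⟪x - y, u⟫_ℝ}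

/-- The minimal width of a set: the infimum of the directional widths over all
unit vectors. -/
def minWidth (C : Set E2) : ℝ :=
  sInf {w : ℝ | ∃ u : E2, ‖u‖ = 1 ∧ w = dirWidth C u}

/-- The inradius of a set. -/
def inradius (C : Set E2) : ℝ :=
  sSup {r : ℝ | 0 ≤ r ∧ ∃ c : E2, closedBall c r ⊆ C}

/-- The circumradius of a set. -/
def circumradius (C : Set E2) : ℝ :=
  sInf {r : ℝ | 0 ≤ r ∧ ∃ c : E2, C ⊆ closedBall c r}

/-- The dual disk-polygon of a set `D`. -/
def dualDP (D : Set E2) : Set E2 := {y : E2 | ∀ x ∈ D, dist x y ≤ 1}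
-- key algebraic lemma
lemma aux_key {ι : Type*} [Fintype ι] (hcard : Fintype.card ι ≤ 3) {r : ℝ} (hr : 0 < r)
    (v : ι → E2) (hv : ∀ i, ‖v i‖ = r) (w : ι → ℝ) (hw : ∀ i, 0 < w i)
    (hw1 : ∑ i, w i = 1) (hsum : ∑ i, w i • v i = 0)
    {i₀ j₀ : ι} (hij : i₀ ≠ j₀) :
    ∃ i j, ⟪v i, v j⟫_ℝ ≤ -(r^2/2) := by
  classical
  by_contra hcon
  push_neg at hcon
  have h0 : ∑ p : ι × ι, w p.1 * (w p.2 * ⟪v p.1, v p.2⟫_ℝ) = 0 := by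
    rw [Fintype.sum_prod_type]
    have h1 : ⟪∑ i, w i • v i, ∑ j, w j • v j⟫_ℝ = 0 := by rw [hsum, inner_zero_left]
    rw [sum_inner] at h1
    simp_rw [inner_sum, real_inner_smul_left, real_inner_smul_right] at h1
    exact h1
  set L : ι × ι → ℝ := fun p =>
    -(r^2/2) * (w p.1 * w p.2) + (if p.1 = p.2 then (3/2)*r^2*(w p.1 * w p.1) else 0) with hL
  have hle : ∀ p ∈ (Finset.univ : Finset (ι × ι)), L p ≤ w p.1 * (w p.2 * ⟪v p.1, v p.2⟫_ℝ) := by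
    rintro ⟨i, j⟩ -
    by_cases h : i = j
    · subst h
      have hvv : ⟪v i, v i⟫_ℝ = r ^ 2 := by
        rw [real_inner_self_eq_norm_sq, hv]
      simp only [hL, if_pos rfl, if_true, hvv]
      nlinarith [sq_nonneg (w i)]
    · simp only [hL, if_neg h]
      nlinarith [hcon i j, mul_pos (hw i) (hw j)]
  have hlt : L (i₀, j₀) < w i₀ * (w j₀ * ⟪v i₀, v j₀⟫_ℝ) := by
    simp only [hL, if_neg hij]
    nlinarith [hcon i₀ j₀, mul_pos (hw i₀) (hw j₀)]
  have hstrict : ∑ p : ι × ι, L p < ∑ p : ι × ι, w p.1 * (w p.2 * ⟪v p.1, v p.2⟫_ℝ) :=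
    Finset.sum_lt_sum hle ⟨(i₀, j₀), Finset.mem_univ _, hlt⟩
  rw [h0] at hstrict
  have hsplit : ∑ p : ι × ι, L p
      = -(r^2/2) * ((∑ i, w i) * (∑ j, w j)) + (3/2)*r^2*(∑ i, w i * w i) := by
    rw [hL]
    rw [Finset.sum_add_distrib]
    congr 1
    · rw [← Finset.mul_sum, Fintype.sum_prod_type]
      simp_rw [← Finset.mul_sum, ← Finset.sum_mul]
    · rw [Fintype.sum_prod_type]
      simp only [Finset.sum_ite_eq, Finset.mem_univ, if_true]
      rw [Finset.mul_sum]
  rw [hsplit, hw1] at hstrict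
  have hA : (1:ℝ) ≤ 3 * ∑ i, w i * w i := by
    have h1 := sq_sum_le_card_mul_sum_sq (s := (Finset.univ : Finset ι)) (f := w)
    rw [hw1] at h1
    have hc : (Fintype.card ι : ℝ) ≤ 3 := by exact_mod_cast hcard
    have hs : 0 ≤ ∑ i, w i ^ 2 := Finset.sum_nonneg fun i _ => sq_nonneg _
    simp_rw [← sq]
    calc (1:ℝ) = 1 ^ 2 := by norm_num
      _ ≤ (Fintype.card ι : ℝ) * ∑ i, w i ^ 2 := by exact_mod_cast h1
      _ ≤ 3 * ∑ i, w i ^ 2 := by nlinarith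
  nlinarith [sq_nonneg r]

lemma exists_minimizer (S : Finset E2) (hS : S.Nonempty) :
    ∃ o : E2, ∀ x : E2, S.sup' hS (fun c => dist o c) ≤ S.sup' hS (fun c => dist x c) := by
  set f : E2 → ℝ := fun x => S.sup' hS (fun c => dist x c) with hf
  have hcont : Continuous f :=
    Continuous.finset_sup'_apply hS (fun c _ => Continuous.dist continuous_id continuous_const)
  obtain ⟨c₀, hc₀⟩ := hS
  have hfc : ∀ x c, c ∈ S → dist x c ≤ f x := fun x c hc => Finset.le_sup' _ hc
  have hco : IsCompact (closedBall c₀ (f c₀)) := isCompact_closedBall _ _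
  have hne : (closedBall c₀ (f c₀)).Nonempty := by
    refine ⟨c₀, ?_⟩
    rw [mem_closedBall, dist_self]
    exact le_trans dist_nonneg (hfc c₀ c₀ hc₀)
  obtain ⟨o, hoK, homin⟩ := hco.exists_isMinOn hne hcont.continuousOn
  refine ⟨o, fun x => ?_⟩
  by_cases hx : x ∈ closedBall c₀ (f c₀)
  · exact homin hx
  · have h1 : f c₀ < dist x c₀ := by
      rw [mem_closedBall] at hx
      exact lt_of_not_ge hx
    have hc₀K : c₀ ∈ closedBall c₀ (f c₀) := by
      rw [mem_closedBall, dist_self]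
      exact le_trans dist_nonneg (hfc c₀ c₀ hc₀)
    calc f o ≤ f c₀ := homin hc₀K
      _ ≤ dist x c₀ := le_of_lt h1
      _ ≤ f x := hfc x c₀ hc₀

lemma aux_key2 {ι : Type*} [Fintype ι] (hcard : Fintype.card ι ≤ 3) {r d : ℝ} (hr : 0 < r)
    (hd : 0 ≤ d) (o : E2) (z : ι → E2) (w : ι → ℝ) (hzr : ∀ i, ‖z i - o‖ = r)
    (hwpos : ∀ i, 0 < w i) (hw1 : ∑ i, w i = 1) (hsumz : ∑ i, w i • z i = o)
    (hdist : ∀ i j, dist (z i) (z j) ≤ d) : 3 * r^2 ≤ d^2 := by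
  have hne : Nonempty ι := by
    by_contra h
    haveI := not_nonempty_iff.mp h
    rw [Finset.univ_eq_empty, Finset.sum_empty] at hw1
    norm_num at hw1
  obtain ⟨i1⟩ := hne
  have hsumv : ∑ i, w i • (z i - o) = 0 := by
    simp_rw [smul_sub]
    rw [Finset.sum_sub_distrib, ← Finset.sum_smul, hw1, one_smul, hsumz, sub_self]
  rcases lt_or_ge 1 (Fintype.card ι) with hc2 | hc1
  · obtain ⟨i₀, j₀, hij⟩ := Fintype.exists_pair_of_one_lt_card hc2
    obtain ⟨i, j, hip⟩ := aux_key hcard hr (fun i => z i - o) hzr w hwpos hw1 hsumv hij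
    have hdij : dist (z i) (z j) ≤ d := hdist i j
    have hsq : dist (z i) (z j) ^ 2
        = ‖z i - o‖^2 - 2 * ⟪z i - o, z j - o⟫_ℝ + ‖z j - o‖^2 := by
      rw [dist_eq_norm]
      have hx : z i - z j = (z i - o) - (z j - o) := by abel
      rw [hx, norm_sub_sq_real]
    rw [hzr, hzr] at hsq
    nlinarith [dist_nonneg (x := z i) (y := z j)]
  · exfalso
    have huniv : (Finset.univ : Finset ι) = {i1} := by
      apply Finset.eq_singleton_iff_unique_mem.mpr
      exact ⟨Finset.mem_univ _, fun j _ => Fintype.card_le_one_iff.mp hc1 j i1⟩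
    rw [huniv, Finset.sum_singleton] at hw1 hsumz
    rw [hw1, one_smul] at hsumz
    have h0 := hzr i1
    rw [hsumz, sub_self, norm_zero] at h0
    linarith

lemma jung (d : ℝ) (hd : 0 ≤ d) (S : Finset E2) (hS : S.Nonempty)
    (hcp : ∀ c ∈ S, ∀ c' ∈ S, dist c c' ≤ d) :
    ∃ o : E2, ∀ c ∈ S, dist o c ≤ d / Real.sqrt 3 := by
  classical
  obtain ⟨o, hmin⟩ := exists_minimizer S hS
  set r := S.sup' hS (fun c => dist o c) with hrdef
  have hrc : ∀ c ∈ S, dist o c ≤ r := fun c hc => Finset.le_sup' _ hc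
  have hs3 : (0:ℝ) < Real.sqrt 3 := Real.sqrt_pos.mpr (by norm_num)
  refine ⟨o, fun c hc => le_trans (hrc c hc) ?_⟩
  rcases le_or_gt r 0 with hr | hr
  · exact le_trans hr (by positivity)
  set T := S.filter (fun c => dist o c = r) with hT
  have hTS : T ⊆ S := Finset.filter_subset _ _
  have hTr : ∀ c ∈ T, dist o c = r := fun c hc => (Finset.mem_filter.mp hc).2
  have hTne : T.Nonempty := by
    obtain ⟨c', hc', hceq⟩ := Finset.exists_mem_eq_sup' hS (fun c => dist o c)
    exact ⟨c', Finset.mem_filter.mpr ⟨hc', hceq.symm⟩⟩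
  -- o is in the convex hull of the farthest points T
  have hhull : o ∈ convexHull ℝ (T : Set E2) := by
    by_contra hno
    have hconv : Convex ℝ (convexHull ℝ (T : Set E2)) := convex_convexHull _ _
    have hclosed : IsClosed (convexHull ℝ (T : Set E2)) :=
      (T.finite_toSet.isCompact_convexHull ℝ).isClosed
    obtain ⟨f, u, hfo, hfb⟩ := geometric_hahn_banach_point_closed hconv hclosed hno
    set vv := (InnerProductSpace.toDual ℝ E2).symm f with hvvdef
    have hfip : ∀ x, ⟪vv, x⟫_ℝ = f x := fun x => InnerProductSpace.toDual_symm_apply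
    set δ := u - f o with hδ
    have hδpos : 0 < δ := sub_pos.mpr hfo
    have hTd : ∀ c' ∈ T, δ ≤ ⟪vv, c' - o⟫_ℝ := by
      intro c' hc'
      have h1 : u < f c' := hfb c' (subset_convexHull ℝ _ (Finset.mem_coe.mpr hc'))
      rw [hfip, map_sub]
      simp only [hδ]
      linarith
    have hvvne : vv ≠ 0 := by
      obtain ⟨c', hc'⟩ := hTne
      intro h0
      have := hTd c' hc'
      rw [h0, inner_zero_left] at this
      linarith
    have hnv : 0 < ‖vv‖ := norm_pos_iff.mpr hvvne
    set g : E2 → ℝ := fun c' =>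
      if dist o c' = r then δ / ‖vv‖^2 else (r - dist o c') / (2 * ‖vv‖) with hg
    set t := S.inf' hS g with ht
    have htpos : 0 < t := by
      rw [ht, Finset.lt_inf'_iff]
      intro c' hc'
      show (0:ℝ) < if dist o c' = r then δ / ‖vv‖^2 else (r - dist o c') / (2 * ‖vv‖)
      by_cases hcr : dist o c' = r
      · rw [if_pos hcr]; positivity
      · rw [if_neg hcr]
        have h2 : dist o c' < r := lt_of_le_of_ne (hrc c' hc') hcr
        have h3 : 0 < r - dist o c' := by linarith
        positivity
    have hkey : ∀ c' ∈ S, dist (o + t • vv) c' < r := by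
      intro c' hc'
      have hts : t ≤ if dist o c' = r then δ / ‖vv‖^2 else (r - dist o c') / (2 * ‖vv‖) :=
        Finset.inf'_le _ hc'
      by_cases hcr : dist o c' = r
      · rw [if_pos hcr] at hts
        have hcT : c' ∈ T := Finset.mem_filter.mpr ⟨hc', hcr⟩
        have hip : δ ≤ ⟪vv, c' - o⟫_ℝ := hTd c' hcT
        have htv : t * ‖vv‖^2 ≤ δ := by
          rw [le_div_iff₀ (by positivity : (0:ℝ) < ‖vv‖^2)] at hts
          exact hts
        have hsq : dist (o + t • vv) c' ^ 2
            = r^2 - 2 * (t * ⟪vv, c' - o⟫_ℝ) + t^2 * ‖vv‖^2 := by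
          rw [dist_eq_norm]
          have hx : o + t • vv - c' = (o - c') + t • vv := by abel
          rw [hx, norm_add_sq_real]
          have h1 : ⟪o - c', t • vv⟫_ℝ = -(t * ⟪vv, c' - o⟫_ℝ) := by
            rw [real_inner_smul_right, real_inner_comm]
            have hoc : o - c' = -(c' - o) := by abel
            rw [hoc, inner_neg_right]
            ring
          have h2 : ‖o - c'‖ = r := by rw [← dist_eq_norm]; exact hcr
          have h3 : ‖t • vv‖^2 = t^2 * ‖vv‖^2 := by
            rw [norm_smul, Real.norm_eq_abs, mul_pow, sq_abs]
          rw [h1, h2, h3]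
          ring
        have e1 : t * (t * ‖vv‖^2) ≤ t * δ := mul_le_mul_of_nonneg_left htv htpos.le
        have e2 : t * δ ≤ t * ⟪vv, c' - o⟫_ℝ := mul_le_mul_of_nonneg_left hip htpos.le
        have hlt2 : dist (o + t • vv) c' ^ 2 < r ^ 2 := by
          nlinarith [mul_pos htpos hδpos]
        exact lt_of_pow_lt_pow_left₀ 2 hr.le hlt2
      · rw [if_neg hcr] at hts
        have hlt : dist o c' < r := lt_of_le_of_ne (hrc c' hc') hcr
        have h1 : dist (o + t • vv) c' ≤ dist (o + t • vv) o + dist o c' := dist_triangle _ _ _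
        have h2 : dist (o + t • vv) o = t * ‖vv‖ := by
          rw [dist_eq_norm, add_sub_cancel_left, norm_smul, Real.norm_eq_abs, abs_of_pos htpos]
        have h3 : t * ‖vv‖ ≤ (r - dist o c') / 2 := by
          have h4 := mul_le_mul_of_nonneg_right hts hnv.le
          have h5 : (r - dist o c') / (2 * ‖vv‖) * ‖vv‖ = (r - dist o c') / 2 := by
            field_simp
          linarith [h5 ▸ h4]
        linarith
    have hlt : S.sup' hS (fun c' => dist (o + t • vv) c') < r := by
      rw [Finset.sup'_lt_iff]
      exact hkey
    exact absurd (hmin (o + t • vv)) (not_le.mpr hlt)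
  -- Caratheodory representation
  obtain ⟨ι, hfin, z, w, hzT, haff, hwpos, hw1, hsumz⟩ :=
    eq_pos_convex_span_of_mem_convexHull hhull
  have hzS : ∀ i, z i ∈ S := fun i => hTS (by exact_mod_cast hzT (Set.mem_range_self i))
  have hzr : ∀ i, ‖z i - o‖ = r := by
    intro i
    have hmem : (z i) ∈ T := by exact_mod_cast hzT (Set.mem_range_self i)
    rw [← dist_eq_norm, dist_comm]
    exact hTr _ hmem
  have h3r : 3 * r^2 ≤ d^2 := by
    letI := hfin
    have hcard : Fintype.card ι ≤ 3 := by
      calc Fintype.card ι ≤ Module.finrank ℝ (vectorSpan ℝ (Set.range z)) + 1 :=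
            haff.card_le_finrank_succ
        _ ≤ Module.finrank ℝ E2 + 1 := Nat.add_le_add_right (Submodule.finrank_le _) 1
        _ = 3 := by rw [finrank_euclideanSpace_fin]
    exact aux_key2 hcard hr hd o z w hzr hwpos hw1 hsumz
      (fun i j => hcp _ (hzS i) _ (hzS j))
  rw [le_div_iff₀ hs3]
  nlinarith [Real.sq_sqrt (show (0:ℝ) ≤ 3 by norm_num), Real.sqrt_nonneg 3]

/-- For a disk-polygon with center parameter `d`, `1 ≤ d < √3`, the circumradius
of the dual disk-polygon is at most `d/√3`. -/
theorem circumradius_dual_le (d : ℝ) (hd1 : 1 ≤ d) (hd2 : d < Real.sqrt 3)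
    (S : Finset E2) (hS : S.Nonempty) (D : Set E2)
    (hD : D = ⋂ c ∈ S, closedBall c 1) (hint : (interior D).Nonempty)
    (hcp : ∀ c ∈ S, ∀ c' ∈ S, dist c c' ≤ d) :
    circumradius (dualDP D) ≤ d / Real.sqrt 3 := by
  have hs3 : (0:ℝ) < Real.sqrt 3 := Real.sqrt_pos.mpr (by norm_num)
  have hd0 : 0 ≤ d := le_trans zero_le_one hd1
  set ρ := d / Real.sqrt 3 with hρ
  have hρ0 : 0 ≤ ρ := by positivity
  have hρ1 : ρ ≤ 1 := le_of_lt ((div_lt_one hs3).mpr hd2)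
  obtain ⟨o, ho⟩ := jung d hd0 S hS hcp
  have hsub : dualDP D ⊆ closedBall o ρ := by
    intro y hy
    rw [mem_closedBall]
    by_cases hyo : y = o
    · rw [hyo, dist_self]; exact hρ0
    · set n := ‖y - o‖ with hn
      have hnpos : 0 < n := by
        rw [hn, norm_pos_iff, sub_ne_zero]
        exact hyo
      have hfrac : (0:ℝ) ≤ (1 - ρ)/n := div_nonneg (by linarith) hnpos.le
      set x := o - ((1 - ρ)/n) • (y - o) with hx
      have hxD : x ∈ D := by
        rw [hD, Set.mem_iInter₂]
        intro c hc
        rw [mem_closedBall]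
        have hxo : dist x o = 1 - ρ := by
          rw [dist_eq_norm, hx, sub_sub_cancel_left, norm_neg, norm_smul, Real.norm_eq_abs,
            abs_of_nonneg hfrac]
          field_simp
          rw [hn]
        calc dist x c ≤ dist x o + dist o c := dist_triangle _ _ _
          _ ≤ (1 - ρ) + ρ := add_le_add hxo.le (ho c hc)
          _ = 1 := by ring
      have hd1' : dist x y ≤ 1 := hy x hxD
      have hdxy : dist x y = n + (1 - ρ) := by
        rw [dist_eq_norm, hx]
        have : o - ((1 - ρ)/n) • (y - o) - y = -((1 + (1 - ρ)/n) • (y - o)) := by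
          rw [add_smul, one_smul]
          abel
        rw [this, norm_neg, norm_smul, Real.norm_eq_abs,
          abs_of_nonneg (by linarith : (0:ℝ) ≤ 1 + (1 - ρ)/n), ← hn]
        field_simp
      have hdyo : dist y o = n := by rw [dist_eq_norm, hn]
      rw [hdyo]
      linarith [hdxy ▸ hd1']
  have hmem : ρ ∈ {r : ℝ | 0 ≤ r ∧ ∃ c : E2, dualDP D ⊆ closedBall c r} := ⟨hρ0, o, hsub⟩
  have hbdd : BddBelow {r : ℝ | 0 ≤ r ∧ ∃ c : E2, dualDP D ⊆ closedBall c r} :=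
    ⟨0, fun r hr => hr.1⟩
  exact csInf_le hbdd hmem
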